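/- Let k'/k be a finite extension of fields and let W be a k-subspace of k' with W ≠ {0} and W ≠ k'. Then there exists an intermediate field E of k'/k with E ≠ k' such that: for every commutative k-algebra A and every unit g of the A-algebra k' ⊗_k A, if multiplication by g maps the A-submodule of k' ⊗_k A spanned by {w ⊗ 1 : w ∈ W} into itself, then g lies in the A-submodule of k' ⊗_k A spanned by {x ⊗ 1 : x ∈ E}. -/

import Mathlib

open scoped TensorProduct
open Submodule LinearMap

section aux
variable {k : Type*} [Field k] {A : Type*} [CommRing A] [Algebra k A]
variable {V V₂ V₃ : Type*} [AddCommGroup V] [Module k V] [AddCommGroup V₂] [Module k V₂]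
  [AddCommGroup V₃] [Module k V₃]

lemma my_baseChange_sup (p q : Submodule k V) :
    (p ⊔ q).baseChange A = p.baseChange A ⊔ q.baseChange A := by
  apply le_antisymm
  · rw [Submodule.baseChange_eq_span, Submodule.span_le]
    rintro - ⟨m, hm, rfl⟩
    obtain ⟨u, hu, v, hv, rfl⟩ := Submodule.mem_sup.mp hm
    rw [TensorProduct.mk_apply, TensorProduct.tmul_add]
    exact Submodule.add_mem _
      (Submodule.mem_sup_left (Submodule.tmul_mem_baseChange_of_mem 1 hu))
      (Submodule.mem_sup_right (Submodule.tmul_mem_baseChange_of_mem 1 hv))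
  · apply sup_le <;> rw [Submodule.baseChange_eq_span, Submodule.span_le] <;> rintro - ⟨m, hm, rfl⟩
    · exact Submodule.tmul_mem_baseChange_of_mem 1 (Submodule.mem_sup_left hm)
    · exact Submodule.tmul_mem_baseChange_of_mem 1 (Submodule.mem_sup_right hm)

lemma my_baseChange_eq_range (p : Submodule k V) :
    p.baseChange A = LinearMap.range (p.subtype.baseChange A) := by
  apply le_antisymm
  · rw [Submodule.baseChange_eq_span, Submodule.span_le]
    rintro - ⟨m, hm, rfl⟩
    exact ⟨(1 : A) ⊗ₜ[k] (⟨m, hm⟩ : p), rfl⟩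
  · rintro - ⟨x, rfl⟩
    induction x using TensorProduct.induction_on with
    | zero => simp
    | tmul a m => exact Submodule.tmul_mem_baseChange_of_mem a m.2
    | add x y hx hy => rw [map_add]; exact Submodule.add_mem _ hx hy

lemma my_baseChange_le_ker {T : V →ₗ[k] V₂} (p : Submodule k V) (hp : p ≤ LinearMap.ker T) :
    p.baseChange A ≤ LinearMap.ker (T.baseChange A) := by
  rw [Submodule.baseChange_eq_span, Submodule.span_le]
  rintro - ⟨m, hm, rfl⟩
  simp [LinearMap.mem_ker, (LinearMap.mem_ker).mp (hp hm)]

lemma my_ker_baseChange (T : V →ₗ[k] V₂) :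
    LinearMap.ker (T.baseChange A) = (LinearMap.ker T).baseChange A := by
  apply le_antisymm
  · obtain ⟨C, hC⟩ := Submodule.exists_isCompl (LinearMap.ker T)
    intro x hx
    have htop : x ∈ (LinearMap.ker T).baseChange A ⊔ C.baseChange A := by
      rw [← my_baseChange_sup, hC.sup_eq_top, Submodule.baseChange_top]; trivial
    obtain ⟨u, hu, c, hc, rfl⟩ := Submodule.mem_sup.mp htop
    have hcr := (my_baseChange_eq_range (A := A) C).le hc
    obtain ⟨c', rfl⟩ := hcr
    have hu0 : T.baseChange A u = 0 := my_baseChange_le_ker _ le_rfl hu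
    have hc0 : (T ∘ₗ C.subtype).baseChange A c' = 0 := by
      rw [LinearMap.baseChange_comp, LinearMap.comp_apply]
      have : T.baseChange A (C.subtype.baseChange A c') = 0 := by
        have := LinearMap.mem_ker.mp hx
        rw [map_add, hu0, zero_add] at this
        exact this
      exact this
    have hinj : Function.Injective (T ∘ₗ C.subtype) := by
      rw [← LinearMap.ker_eq_bot, eq_bot_iff]
      rintro ⟨v, hv⟩ hvk
      have hvm : v ∈ LinearMap.ker T ⊓ C :=
        ⟨LinearMap.mem_ker.mp hvk, hv⟩
      rw [hC.disjoint.eq_bot] at hvm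
      simpa [Submodule.mem_bot] using hvm
    have : Function.Injective ((T ∘ₗ C.subtype).baseChange A) := by
      have := Module.Flat.lTensor_preserves_injective_linearMap (M := A) (T ∘ₗ C.subtype) hinj
      rwa [← LinearMap.baseChange_eq_ltensor] at this
    have : c' = 0 := this (by rw [hc0, map_zero])
    subst this
    rw [map_zero, add_zero]
    exact hu
  · exact my_baseChange_le_ker _ le_rfl

lemma my_baseChange_prod_apply (f : V →ₗ[k] V₂) (g : V →ₗ[k] V₃) (x : A ⊗[k] V) :
    TensorProduct.prodRight k A A V₂ V₃ ((f.prod g).baseChange A x)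
      = (f.baseChange A x, g.baseChange A x) := by
  induction x using TensorProduct.induction_on with
  | zero => simp; rfl
  | tmul a m => simp
  | add x y hx hy => simp only [map_add, hx, hy, Prod.mk_add_mk]

lemma my_ker_baseChange_prod (f : V →ₗ[k] V₂) (g : V →ₗ[k] V₃) (x : A ⊗[k] V) :
    (f.prod g).baseChange A x = 0 ↔ f.baseChange A x = 0 ∧ g.baseChange A x = 0 := by
  rw [← (TensorProduct.prodRight k A A V₂ V₃).map_eq_zero_iff, my_baseChange_prod_apply,
    Prod.mk_eq_zero]

lemma my_baseChange_inf (p q : Submodule k V) :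
    (p ⊓ q).baseChange A = p.baseChange A ⊓ q.baseChange A := by
  have h : p ⊓ q = LinearMap.ker ((p.mkQ).prod (q.mkQ)) := by
    rw [LinearMap.ker_prod, Submodule.ker_mkQ, Submodule.ker_mkQ]
  rw [h, ← my_ker_baseChange]
  ext x
  rw [LinearMap.mem_ker, my_ker_baseChange_prod, Submodule.mem_inf,
    ← LinearMap.mem_ker, ← LinearMap.mem_ker, my_ker_baseChange, my_ker_baseChange,
    Submodule.ker_mkQ, Submodule.ker_mkQ]

lemma my_baseChange_finset_inf {ι : Type*} [DecidableEq ι] (s : Finset ι)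
    (p : ι → Submodule k V) :
    (s.inf p).baseChange A = s.inf (fun i => (p i).baseChange A) := by
  induction s using Finset.induction_on with
  | empty => simp
  | insert _ _ _ ih => rw [Finset.inf_insert, Finset.inf_insert, my_baseChange_inf, ih]

lemma my_baseChange_iInf {ι : Type*} [Fintype ι] [DecidableEq ι] (p : ι → Submodule k V) :
    (⨅ i, p i).baseChange A = ⨅ i, (p i).baseChange A := by
  rw [← Finset.inf_univ_eq_iInf, ← Finset.inf_univ_eq_iInf, my_baseChange_finset_inf]

end aux
section mainaux
variable {k : Type*} [Field k] {A : Type*} [CommRing A] [Algebra k A]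

lemma my_baseChange_mulRight {B : Type*} [Ring B] [Algebra k B] (c : B) (x : A ⊗[k] B) :
    (LinearMap.mulRight k c).baseChange A x = x * (1 ⊗ₜ[k] c) := by
  induction x using TensorProduct.induction_on with
  | zero => simp
  | tmul a v => simp [Algebra.TensorProduct.tmul_mul_tmul]
  | add x y hx hy => rw [map_add, add_mul, hx, hy]

end mainaux

theorem stmt_8 (k k' : Type*) [Field k] [Field k'] [Algebra k k']
    [FiniteDimensional k k'] (W : Submodule k k') (hW0 : W ≠ ⊥) (hWtop : W ≠ ⊤) :
    ∃ E : IntermediateField k k', E ≠ ⊤ ∧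
      ∀ (A : Type*) [CommRing A] [Algebra k A], ∀ g : (A ⊗[k] k')ˣ,
        (∀ v ∈ Submodule.span A {z : A ⊗[k] k' | ∃ w ∈ W, z = 1 ⊗ₜ[k] w},
            (g : A ⊗[k] k') * v ∈
              Submodule.span A {z : A ⊗[k] k' | ∃ w ∈ W, z = 1 ⊗ₜ[k] w}) →
        (g : A ⊗[k] k') ∈
          Submodule.span A {z : A ⊗[k] k' | ∃ e ∈ E, z = 1 ⊗ₜ[k] e} := by
  classical
  set S : Subalgebra k k' :=
    { carrier := {x : k' | ∀ w ∈ W, x * w ∈ W}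
      mul_mem' := fun {a b} ha hb w hw => by rw [mul_assoc]; exact ha _ (hb w hw)
      one_mem' := fun w hw => by rw [one_mul]; exact hw
      add_mem' := fun {a b} ha hb w hw => by rw [add_mul]; exact W.add_mem (ha w hw) (hb w hw)
      zero_mem' := fun w hw => by rw [zero_mul]; exact W.zero_mem
      algebraMap_mem' := fun c w hw => by
        rw [← Algebra.smul_def]; exact W.smul_mem c hw } with hS
  have inv_mem' : ∀ x ∈ S.carrier, x⁻¹ ∈ S.carrier := by
    intro x hx
    rcases eq_or_ne x 0 with rfl | hx0
    · intro w hw; rw [inv_zero, zero_mul]; exact W.zero_mem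
    · let f : W →ₗ[k] W :=
        { toFun := fun w => ⟨x * w, hx w w.2⟩
          map_add' := fun a b => by ext; simp [mul_add]
          map_smul' := fun c a => by ext; simp [Algebra.mul_smul_comm] }
      have hfinj : Function.Injective f := by
        intro a b hab
        have h2 : x * a = x * b := congrArg Subtype.val hab
        ext
        exact mul_left_cancel₀ hx0 h2
      have hfsurj : Function.Surjective f := (LinearMap.injective_iff_surjective).mp hfinj
      intro w hw
      obtain ⟨w', hw'⟩ := hfsurj ⟨w, hw⟩
      have h3 : x * w' = w := congrArg Subtype.val hw'
      have h4 : x⁻¹ * w = (w' : k') := by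
        rw [← h3, ← mul_assoc, inv_mul_cancel₀ hx0, one_mul]
      rw [h4]; exact w'.2
  set E : IntermediateField k k' := { toSubalgebra := S, inv_mem' := inv_mem' } with hE
  have hEne : E ≠ ⊤ := by
    intro h
    obtain ⟨w₀, hw₀W, hw₀⟩ := Submodule.ne_bot_iff W |>.mp hW0
    apply hWtop
    rw [eq_top_iff]
    intro y _
    have hy : y * w₀⁻¹ ∈ E := h ▸ IntermediateField.mem_top
    have := hy w₀ hw₀W
    rwa [mul_assoc, inv_mul_cancel₀ hw₀, mul_one] at this
  refine ⟨E, hEne, ?_⟩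
  intro A _ _ g hg
  -- identify spans with base changes
  have hset1 : {z : A ⊗[k] k' | ∃ w ∈ W, z = 1 ⊗ₜ[k] w}
      = ⇑(TensorProduct.mk k A k' 1) '' (W : Set k') := by
    ext z; constructor
    · rintro ⟨w, hw, rfl⟩; exact ⟨w, hw, rfl⟩
    · rintro ⟨w, hw, rfl⟩; exact ⟨w, hw, rfl⟩
  have hSW : Submodule.span A {z : A ⊗[k] k' | ∃ w ∈ W, z = 1 ⊗ₜ[k] w} = W.baseChange A := by
    rw [hset1, Submodule.baseChange_eq_span, Submodule.map_coe]
  set eSub : Submodule k k' := Subalgebra.toSubmodule S with heSub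
  have hset2 : {z : A ⊗[k] k' | ∃ e ∈ E, z = 1 ⊗ₜ[k] e}
      = ⇑(TensorProduct.mk k A k' 1) '' (eSub : Set k') := by
    ext z; constructor
    · rintro ⟨e, he, rfl⟩; exact ⟨e, he, rfl⟩
    · rintro ⟨e, he, rfl⟩; exact ⟨e, he, rfl⟩
  have hSE : Submodule.span A {z : A ⊗[k] k' | ∃ e ∈ E, z = 1 ⊗ₜ[k] e}
      = eSub.baseChange A := by
    rw [hset2, Submodule.baseChange_eq_span, Submodule.map_coe]
  rw [hSE]
  rw [hSW] at hg
  -- finite generating set for W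
  obtain ⟨s, hs⟩ : W.FG := IsNoetherian.noetherian W
  set T : s → (k' →ₗ[k] k' ⧸ W) :=
    fun i => W.mkQ ∘ₗ (LinearMap.mulRight k (i : k')) with hT
  have hEker : eSub = ⨅ i : s, LinearMap.ker (T i) := by
    ext x
    simp only [Submodule.mem_iInf, LinearMap.mem_ker, hT, LinearMap.comp_apply,
      LinearMap.mulRight_apply, Submodule.mkQ_apply, Submodule.Quotient.mk_eq_zero]
    constructor
    · intro hx i
      exact hx (i : k') (hs ▸ Submodule.subset_span i.2)
    · intro h w hw
      have hle : Submodule.span k (s : Set k') ≤ W.comap (LinearMap.mulLeft k x) := by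
        rw [Submodule.span_le]
        intro c hc
        simpa using h ⟨c, hc⟩
      have := hle (hs ▸ hw)
      simpa using this
  rw [hEker, my_baseChange_iInf, Submodule.mem_iInf]
  intro i
  rw [← my_ker_baseChange, LinearMap.mem_ker, hT, LinearMap.baseChange_comp,
    LinearMap.comp_apply, my_baseChange_mulRight]
  have hv : (1 : A) ⊗ₜ[k] (i : k') ∈ W.baseChange A :=
    Submodule.tmul_mem_baseChange_of_mem 1 (hs ▸ Submodule.subset_span i.2)
  have hgv : (g : A ⊗[k] k') * (1 ⊗ₜ[k] (i : k')) ∈ W.baseChange A := hg _ hv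
  have : (g : A ⊗[k] k') * (1 ⊗ₜ[k] (i : k')) ∈ LinearMap.ker (W.mkQ.baseChange A) := by
    rw [my_ker_baseChange, Submodule.ker_mkQ]
    exact hgv
  exact LinearMap.mem_ker.mp this
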